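/- Let A₁ and A₂ be disjoint subsets of {1,…,n}, and let P be a partition of A₂ into pairs (a perfect matching of A₂ of size m = |A₂|/2). Let W be the set of vertices of G(n,3,1) of the form {x} ∪ e with x ∈ A₁ and e ∈ P. Then |W| = |A₁|·m, the subgraph of G(n,3,1) induced on W is regular of degree m − 1, and the number of edges of G(n,3,1) with both endpoints in W equals |A₁|·m·(m−1)/2. -/

import Mathlib

/-- The vertices of `G(n,3,1)`: 3-element subsets of `{1, …, n}`. -/
abbrev Vtx (n : ℕ) := {s : Finset ℕ // s ⊆ Finset.Icc 1 n ∧ s.card = 3}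

/-- The graph `G(n,3,1)`: two 3-element subsets of `{1, …, n}` are adjacent
iff they intersect in exactly one element. -/
def G (n : ℕ) : SimpleGraph (Vtx n) where
  Adj a b := (a.1 ∩ b.1).card = 1
  symm := ⟨by intro a b h; change (a.1 ∩ b.1).card = 1 at h; show (b.1 ∩ a.1).card = 1; rwa [Finset.inter_comm]⟩
  loopless := ⟨by intro a h; change (a.1 ∩ a.1).card = 1 at h; rw [Finset.inter_self, a.2.2] at h; omega⟩

instance (n : ℕ) : DecidableRel (G n).Adj := fun a b =>
  inferInstanceAs (Decidable ((a.1 ∩ b.1).card = 1))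

instance (n : ℕ) : Fintype (Vtx n) :=
  Fintype.subtype ((Finset.Icc 1 n).powerset.filter fun s => s.card = 3) (by
    intro s
    simp [Finset.mem_powerset, and_comm])

instance (n : ℕ) (s : Set (Vtx n)) : DecidableRel ((G n).induce s).Adj := fun a b =>
  inferInstanceAs (Decidable (((a : Vtx n).1 ∩ (b : Vtx n).1).card = 1))

/-- The number of edges of `G(n,3,1)` with both endpoints in `W`. -/
def edgesIn (n : ℕ) (W : Finset (Vtx n)) : ℕ :=
  ((G n).induce (W : Set (Vtx n))).edgeFinset.card

/-- The independence number of `G(n,3,1)`. -/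
noncomputable def alpha (n : ℕ) : ℕ :=
  sSup {k | ∃ W : Finset (Vtx n), W.card = k ∧ ∀ u ∈ W, ∀ v ∈ W, ¬ (G n).Adj u v}

/-- The minimal number of edges induced on a vertex subset of cardinality `l`. -/
noncomputable def rmin (n l : ℕ) : ℕ :=
  sInf {m | ∃ W : Finset (Vtx n), W.card = l ∧ edgesIn n W = m}

/-- Let `A₁, A₂ ⊆ {1, …, n}` be disjoint and let `P` be a partition of `A₂` into
`m` pairs. Let `W` be the set of vertices of `G(n,3,1)` of the form `{x} ∪ e` with
`x ∈ A₁` and `e ∈ P`. Then `|W| = |A₁|·m`, the subgraph induced on `W` is regular of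
degree `m − 1`, and `W` spans exactly `|A₁|·m·(m−1)/2` edges of `G(n,3,1)`. -/
theorem stmt_9 (n m : ℕ) (A₁ A₂ : Finset ℕ)
    (hA₁ : A₁ ⊆ Finset.Icc 1 n) (hA₂ : A₂ ⊆ Finset.Icc 1 n) (hdisj : Disjoint A₁ A₂)
    (P : Finset (Finset ℕ))
    (hPpair : ∀ e ∈ P, e.card = 2)
    (hPdisj : (P : Set (Finset ℕ)).Pairwise Disjoint)
    (hPunion : P.biUnion id = A₂)
    (hm : P.card = m) (hm2 : 2 * m = A₂.card)
    (W : Finset (Vtx n))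
    (hW : ∀ v : Vtx n, v ∈ W ↔ ∃ x ∈ A₁, ∃ e ∈ P, v.1 = insert x e) :
    W.card = A₁.card * m ∧
    (∀ v : (W : Set (Vtx n)), ((G n).induce (W : Set (Vtx n))).degree v = m - 1) ∧
    edgesIn n W = A₁.card * m * (m - 1) / 2 := by
  classical
  have hsub : ∀ e ∈ P, e ⊆ A₂ := by
    intro e he
    rw [← hPunion]
    exact Finset.subset_biUnion_of_mem id he
  have hxe : ∀ x ∈ A₁, ∀ e ∈ P, x ∉ e := by
    intro x hx e he hmem
    exact Finset.disjoint_left.mp hdisj hx (hsub e he hmem)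
  have hins : ∀ x ∈ A₁, ∀ e ∈ P,
      (insert x e : Finset ℕ) ⊆ Finset.Icc 1 n ∧ (insert x e).card = 3 := by
    intro x hx e he
    constructor
    · exact Finset.insert_subset (hA₁ hx) ((hsub e he).trans hA₂)
    · rw [Finset.card_insert_of_notMem (hxe x hx e he), hPpair e he]
  have hkey : ∀ x ∈ A₁, ∀ e ∈ P, ∀ y ∈ A₁, ∀ f ∈ P,
      (insert x e : Finset ℕ) = insert y f → x = y ∧ e = f := by
    intro x hx e he y hy f hf h
    have hxy : x = y := by
      have hmem : x ∈ insert y f := h ▸ Finset.mem_insert_self x e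
      rcases Finset.mem_insert.mp hmem with h1 | h1
      · exact h1
      · exact absurd h1 (hxe x hx f hf)
    subst hxy
    refine ⟨rfl, ?_⟩
    have h2 := congrArg (fun s => Finset.erase s x) h
    simpa [Finset.erase_insert_of_ne, Finset.erase_insert,
      Finset.erase_eq_of_notMem (hxe x hx e he),
      Finset.erase_eq_of_notMem (hxe x hx f hf)] using h2
  have hedisj : ∀ e ∈ P, ∀ f ∈ P, e ≠ f → ∀ z, z ∈ e → z ∉ f := by
    intro e he f hf hne z hz hzf
    exact Finset.disjoint_left.mp (hPdisj he hf hne) hz hzf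
  have hadj : ∀ x ∈ A₁, ∀ e ∈ P, ∀ y ∈ A₁, ∀ f ∈ P,
      (((insert x e : Finset ℕ) ∩ insert y f).card = 1 ↔ (x = y ∧ e ≠ f)) := by
    intro x hx e he y hy f hf
    by_cases hef : e = f
    · subst hef
      by_cases hxy : x = y
      · subst hxy
        rw [Finset.inter_self, Finset.card_insert_of_notMem (hxe x hx e he), hPpair e he]
        simp
      · have hcap : (insert x e : Finset ℕ) ∩ insert y e = e := by
          ext z
          simp only [Finset.mem_inter, Finset.mem_insert]
          constructor
          · rintro ⟨h1 | h1, h2 | h2⟩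
            · exact absurd (h1.symm.trans h2) hxy
            · exact absurd (h1 ▸ h2) (hxe x hx e he)
            · exact absurd (h2 ▸ h1) (hxe y hy e he)
            · exact h1
          · intro hz; exact ⟨Or.inr hz, Or.inr hz⟩
        rw [hcap, hPpair e he]
        simp [hxy]
    · by_cases hxy : x = y
      · subst hxy
        have hcap : (insert x e : Finset ℕ) ∩ insert x f = {x} := by
          ext z
          simp only [Finset.mem_inter, Finset.mem_insert, Finset.mem_singleton]
          constructor
          · rintro ⟨h1 | h1, h2 | h2⟩
            · exact h1
            · exact h1
            · exact h2
            · exact absurd h2 (hedisj e he f hf hef z h1)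
          · rintro rfl; exact ⟨Or.inl rfl, Or.inl rfl⟩
        rw [hcap]
        simp [hef]
      · have hcap : (insert x e : Finset ℕ) ∩ insert y f = ∅ := by
          ext z
          simp only [Finset.mem_inter, Finset.mem_insert, Finset.notMem_empty, iff_false]
          rintro ⟨h1 | h1, h2 | h2⟩
          · exact hxy (h1.symm.trans h2)
          · exact hxe x hx f hf (h1 ▸ h2)
          · exact hxe y hy e he (h2 ▸ h1)
          · exact hedisj e he f hf hef z h1 h2
        rw [hcap]
        simp [hxy]
  -- cardinality of W
  have hWcard : W.card = A₁.card * m := by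
    have hbij : (A₁ ×ˢ P).card = W.card := by
      refine Finset.card_bij
        (fun p hp => (⟨insert p.1 p.2,
          hins p.1 (Finset.mem_product.mp hp).1 p.2 (Finset.mem_product.mp hp).2⟩ : Vtx n))
        ?_ ?_ ?_
      · intro p hp
        exact (hW _).mpr ⟨p.1, (Finset.mem_product.mp hp).1, p.2,
          (Finset.mem_product.mp hp).2, rfl⟩
      · intro p hp q hq hpq
        have h : (insert p.1 p.2 : Finset ℕ) = insert q.1 q.2 := Subtype.ext_iff.mp hpq
        have h2 := hkey p.1 (Finset.mem_product.mp hp).1 p.2 (Finset.mem_product.mp hp).2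
          q.1 (Finset.mem_product.mp hq).1 q.2 (Finset.mem_product.mp hq).2 h
        exact Prod.ext h2.1 h2.2
      · intro b hb
        obtain ⟨x, hx, e, he, hv⟩ := (hW b).mp hb
        exact ⟨(x, e), Finset.mem_product.mpr ⟨hx, he⟩, Subtype.ext hv.symm⟩
    rw [← hbij, Finset.card_product, hm]
  have hdeg : ∀ v : (W : Set (Vtx n)), ((G n).induce (W : Set (Vtx n))).degree v = m - 1 := by
    intro v
    have hvW : (v : Vtx n) ∈ W := v.2
    obtain ⟨x, hx, e, he, hv⟩ := (hW v).mp hvW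
    have hcnt : (P.erase e).card = (((G n).induce (W : Set (Vtx n))).neighborFinset v).card := by
      refine Finset.card_bij
        (fun f hf => (⟨⟨insert x f,
          hins x hx f (Finset.mem_of_mem_erase hf)⟩,
          (hW _).mpr ⟨x, hx, f, Finset.mem_of_mem_erase hf, rfl⟩⟩ :
          (W : Set (Vtx n)))) ?_ ?_ ?_
      · intro f hf
        rw [SimpleGraph.mem_neighborFinset]
        show ((v : Vtx n).1 ∩ insert x f).card = 1
        rw [hv]
        exact (hadj x hx e he x hx f (Finset.mem_of_mem_erase hf)).mpr
          ⟨rfl, fun h => (Finset.mem_erase.mp hf).1 h.symm⟩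
      · intro f hf g hg hfg
        have h : (insert x f : Finset ℕ) = insert x g :=
          Subtype.ext_iff.mp (Subtype.ext_iff.mp hfg)
        exact (hkey x hx f (Finset.mem_of_mem_erase hf) x hx g (Finset.mem_of_mem_erase hg) h).2
      · intro b hb
        rw [SimpleGraph.mem_neighborFinset] at hb
        have hbW : (b : Vtx n) ∈ W := b.2
        obtain ⟨y, hy, f, hf, hbv⟩ := (hW b).mp hbW
        have hadj' : ((insert x e : Finset ℕ) ∩ insert y f).card = 1 := by
          rw [← hv, ← hbv]; exact hb
        obtain ⟨hxy, hef⟩ := (hadj x hx e he y hy f hf).mp hadj'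
        subst hxy
        refine ⟨f, Finset.mem_erase.mpr ⟨fun h => hef h.symm, hf⟩, ?_⟩
        apply Subtype.ext
        apply Subtype.ext
        exact hbv.symm
    rw [SimpleGraph.degree, ← hcnt, Finset.card_erase_of_mem he, hm]
  refine ⟨hWcard, hdeg, ?_⟩
  have hsum := SimpleGraph.sum_degrees_eq_twice_card_edges ((G n).induce (W : Set (Vtx n)))
  have hcardW : Fintype.card (W : Set (Vtx n)) = W.card := by
    simp
  rw [Finset.sum_congr rfl (fun v _ => hdeg v), Finset.sum_const, smul_eq_mul,
    Finset.card_univ, hcardW, hWcard] at hsum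
  have h2 : 2 * edgesIn n W = A₁.card * m * (m - 1) := by
    rw [edgesIn, ← hsum, mul_assoc]
  omega
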